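/- For every ε > 0 there is a constant C(ε) such that the following holds. Let n ≥ 2 be an integer and f ∈ F_q[t] a polynomial of degree 2n, and let N(f) be the number of monic polynomials a of degree n with a*·a = f. Then N(f) ≤ C(ε) · min { 2^n, q^{(2+ε) n / log_q n} }. -/

import Mathlib

open Polynomial

variable {F : Type} [Field F] [DecidableEq F]

lemma mirror_multiset_prod (s : Multiset F[X]) : s.prod.mirror = (s.map mirror).prod := by
  induction s using Multiset.induction_on with
  | empty => simpa using (mirror_C (1 : F)).trans (by simp)
  | cons p s ih => simp [mirror_mul_of_domain, ih]

lemma irreducible_mirror' {p : F[X]} (hp : Irreducible p) : Irreducible p.mirror := by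
  constructor
  · intro h
    rcases Polynomial.isUnit_iff.1 h with ⟨c, hc, hcp⟩
    exact hp.not_isUnit (by
      rw [← mirror_mirror (p := p), ← hcp, mirror_C]
      exact Polynomial.isUnit_C.2 hc)
  · intro u v huv
    have : p = u.mirror * v.mirror := by
      rw [← mirror_mul_of_domain, ← huv, mirror_mirror]
    rcases hp.isUnit_or_isUnit this with h | h
    · left
      rcases Polynomial.isUnit_iff.1 h with ⟨c, hc, hcp⟩
      have : u = C c := by rw [← mirror_mirror (p := u), ← hcp, mirror_C]
      rw [this]; exact Polynomial.isUnit_C.2 hc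
    · right
      rcases Polynomial.isUnit_iff.1 h with ⟨c, hc, hcp⟩
      have : v = C c := by rw [← mirror_mirror (p := v), ← hcp, mirror_C]
      rw [this]; exact Polynomial.isUnit_C.2 hc

noncomputable def sig (p : F[X]) : F[X] := C (p.coeff 0)⁻¹ * p.mirror

lemma mirror_eq_reverse {p : F[X]} (h0 : p.coeff 0 ≠ 0) : p.mirror = p.reverse := by
  unfold Polynomial.mirror
  rw [natTrailingDegree_eq_zero_of_constantCoeff_ne_zero h0, pow_zero, mul_one]

lemma mirror_coeff_zero {p : F[X]} (h0 : p.coeff 0 ≠ 0) :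
    p.mirror.coeff 0 = p.leadingCoeff := by
  rw [mirror_eq_reverse h0, coeff_zero_reverse]

lemma sig_coeff_zero {p : F[X]} (hm : p.Monic) (h0 : p.coeff 0 ≠ 0) :
    (sig p).coeff 0 = (p.coeff 0)⁻¹ := by
  rw [sig, mul_coeff_zero, coeff_C, if_pos rfl, mirror_coeff_zero h0, hm.leadingCoeff, mul_one]

lemma sig_monic {p : F[X]} (hm : p.Monic) (h0 : p.coeff 0 ≠ 0) : (sig p).Monic := by
  have : (sig p).leadingCoeff = 1 := by
    rw [sig, leadingCoeff_mul, leadingCoeff_C, mirror_leadingCoeff]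
    have : p.trailingCoeff = p.coeff 0 := by
      rw [trailingCoeff, natTrailingDegree_eq_zero_of_constantCoeff_ne_zero h0]
    rw [this, inv_mul_cancel₀ h0]
  exact this

lemma sig_sig {p : F[X]} (hm : p.Monic) (h0 : p.coeff 0 ≠ 0) : sig (sig p) = p := by
  rw [sig, sig_coeff_zero hm h0, inv_inv, sig]
  rw [show (C (p.coeff 0)⁻¹ * p.mirror).mirror = C (p.coeff 0)⁻¹ * p.mirror.mirror by
    rw [← smul_eq_C_mul, ← smul_eq_C_mul, mirror_smul]]
  rw [mirror_mirror, ← mul_assoc, ← C_mul, mul_inv_cancel₀ h0, C_1, one_mul]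

lemma sig_irreducible {p : F[X]} (hp : Irreducible p) (h0 : p.coeff 0 ≠ 0) :
    Irreducible (sig p) := by
  have hpm : Irreducible p.mirror := irreducible_mirror' hp
  have : Associated p.mirror (sig p) := by
    refine ⟨Units.mkOfMulEqOne (C (p.coeff 0)⁻¹) (C (p.coeff 0)) (by
      rw [← C_mul, inv_mul_cancel₀ h0, C_1]), ?_⟩
    simp [sig, mul_comm]
  exact this.irreducible hpm

lemma mem_nf {a p : F[X]} (ha : a ≠ 0) (hp : p ∈ UniqueFactorizationMonoid.normalizedFactors a) :
    p.Monic ∧ Prime p ∧ (a.coeff 0 ≠ 0 → p.coeff 0 ≠ 0) := by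
  have hprime := UniqueFactorizationMonoid.prime_of_normalized_factor p hp
  have hmon : p.Monic := by
    have := UniqueFactorizationMonoid.normalize_normalized_factor p hp
    rw [← this]
    exact monic_normalize hprime.ne_zero
  refine ⟨hmon, hprime, fun h0 => ?_⟩
  rcases UniqueFactorizationMonoid.dvd_of_mem_normalizedFactors hp with ⟨r, hr⟩
  intro hc
  rw [hr, mul_coeff_zero, hc, zero_mul] at h0
  exact h0 rfl

lemma nf_prod_monic {a : F[X]} (ha : a.Monic) :
    (UniqueFactorizationMonoid.normalizedFactors a).prod = a := by
  refine eq_of_monic_of_associated ?_ ha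
    (UniqueFactorizationMonoid.prod_normalizedFactors ha.ne_zero)
  have h1 : (Multiset.map id (UniqueFactorizationMonoid.normalizedFactors a)).prod.Monic :=
    monic_multiset_prod_of_monic _ _ (fun p hp => (mem_nf ha.ne_zero hp).1)
  rwa [Multiset.map_id] at h1

lemma nf_mirror {a : F[X]} (ha : a.Monic) (h0 : a.coeff 0 ≠ 0) :
    UniqueFactorizationMonoid.normalizedFactors a.mirror
      = (UniqueFactorizationMonoid.normalizedFactors a).map sig := by
  classical
  set s := UniqueFactorizationMonoid.normalizedFactors a with hs
  have hfacts : ∀ p ∈ s, p.Monic ∧ Prime p ∧ p.coeff 0 ≠ 0 := by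
    intro p hp
    obtain ⟨h1, h2, h3⟩ := mem_nf ha.ne_zero hp
    exact ⟨h1, h2, h3 h0⟩
  have hprod : s.prod = a := nf_prod_monic ha
  have key : Associated a.mirror ((s.map sig).prod) := by
    rw [← hprod, mirror_multiset_prod]
    have : ∀ (t : Multiset F[X]), (∀ p ∈ t, p.Monic ∧ Prime p ∧ p.coeff 0 ≠ 0) →
        Associated ((t.map mirror).prod) ((t.map sig).prod) := by
      intro t
      induction t using Multiset.induction_on with
      | empty => intro _; simp
      | cons p t ih =>
        intro hmem
        obtain ⟨h1, h2, h3⟩ := hmem p (Multiset.mem_cons_self p t)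
        have hrest := ih (fun q hq => hmem q (Multiset.mem_cons_of_mem hq))
        simp only [Multiset.map_cons, Multiset.prod_cons]
        refine Associated.mul_mul ?_ hrest
        refine ⟨Units.mkOfMulEqOne (C (p.coeff 0)⁻¹) (C (p.coeff 0)) (by
          rw [← C_mul, inv_mul_cancel₀ h3, C_1]), ?_⟩
        simp [sig, mul_comm]
    exact this s (by intro p hp; exact hfacts p hp)
  rw [key.normalizedFactors_eq]
  rw [UniqueFactorizationMonoid.normalizedFactors_prod_eq]
  · rw [Multiset.map_map]
    apply Multiset.map_congr rfl
    intro p hp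
    obtain ⟨h1, h2, h3⟩ := hfacts p hp
    exact Monic.normalize_eq_self (sig_monic h1 h3)
  · intro q hq
    rw [Multiset.mem_map] at hq
    obtain ⟨p, hp, rfl⟩ := hq
    obtain ⟨h1, h2, h3⟩ := hfacts p hp
    exact sig_irreducible h2.irreducible h3

open UniqueFactorizationMonoid in
lemma count_sig_eq {a : F[X]} (ha : a.Monic) (h0 : a.coeff 0 ≠ 0) {p : F[X]}
    (hpm : p.Monic) (hp0 : p.coeff 0 ≠ 0) :
    (Multiset.map sig (normalizedFactors a)).count p = (normalizedFactors a).count (sig p) := by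
  classical
  rw [Multiset.count_map]
  rw [Multiset.count_eq_card_filter_eq]
  congr 1
  apply Multiset.filter_congr
  intro q hq
  obtain ⟨h1, h2, h3⟩ := mem_nf ha.ne_zero hq
  constructor
  · rintro rfl
    exact sig_sig h1 (h3 h0)
  · rintro rfl
    exact (sig_sig hpm hp0).symm

lemma mem_S_facts {n : ℕ} (hn : 1 ≤ n) {f a : F[X]} (hf : f.natDegree = 2*n)
    (h1 : a.Monic) (h2 : a.natDegree = n) (h3 : a.reverse * a = f) :
    a.coeff 0 ≠ 0 ∧ a.mirror * a = f ∧ f.coeff 0 ≠ 0 ∧ f ≠ 0 := by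
  have ha0 : a ≠ 0 := h1.ne_zero
  have hc : a.coeff 0 ≠ 0 := by
    intro hc
    have htd : 1 ≤ a.natTrailingDegree := by
      rcases Nat.eq_zero_or_pos a.natTrailingDegree with h | h
      · rw [natTrailingDegree_eq_zero] at h
        rcases h with h | h
        · exact absurd h ha0
        · exact absurd hc h
      · exact h
    have : f.natDegree ≤ a.reverse.natDegree + a.natDegree := h3 ▸ natDegree_mul_le
    rw [reverse_natDegree, h2, hf] at this
    omega
  have hm : a.mirror * a = f := by rw [mirror_eq_reverse hc, h3]
  have hfc : f.coeff 0 ≠ 0 := by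
    rw [← h3, mul_coeff_zero, coeff_zero_reverse, h1.leadingCoeff, one_mul]
    exact hc
  refine ⟨hc, hm, hfc, fun h => by simp [h] at hf; omega⟩

open UniqueFactorizationMonoid in
lemma ncard_sq_le [Fintype F] {n : ℕ} (hn : 1 ≤ n) {f : F[X]} (hf : f.natDegree = 2*n) :
    {a : F[X] | a.Monic ∧ a.natDegree = n ∧ a.reverse * a = f}.ncard ^ 2
      ≤ ∏ p ∈ (normalizedFactors f).toFinset, ((normalizedFactors f).count p + 1) := by
  classical
  set S := {a : F[X] | a.Monic ∧ a.natDegree = n ∧ a.reverse * a = f} with hS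
  rcases Set.eq_empty_or_nonempty S with hSe | ⟨a₀, ha₀⟩
  · simp [hSe]
  obtain ⟨hc₀, hm₀, hfc, hf0⟩ := mem_S_facts hn hf ha₀.1 ha₀.2.1 ha₀.2.2
  set T := (normalizedFactors f).toFinset with hT
  set e : F[X] → ℕ := fun p => (normalizedFactors f).count p with he
  -- facts about members of T
  have hTfact : ∀ p ∈ T, p.Monic ∧ Prime p ∧ p.coeff 0 ≠ 0 := by
    intro p hp
    rw [hT, Multiset.mem_toFinset] at hp
    obtain ⟨h1, h2, h3⟩ := mem_nf hf0 hp
    exact ⟨h1, h2, h3 hfc⟩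
  -- decomposition for each member of S
  have hrel : ∀ a ∈ S, ∀ p ∈ T,
      e p = (normalizedFactors a).count (sig p) + (normalizedFactors a).count p := by
    intro a ha p hp
    obtain ⟨hac, ham, _, _⟩ := mem_S_facts hn hf ha.1 ha.2.1 ha.2.2
    have ha0 : a ≠ 0 := ha.1.ne_zero
    have hmir0 : a.mirror ≠ 0 := fun h => ha0 (mirror_eq_zero.mp h)
    have hnf : normalizedFactors f = Multiset.map sig (normalizedFactors a)
        + normalizedFactors a := by
      rw [← ham, normalizedFactors_mul hmir0 ha0, nf_mirror ha.1 hac]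
    obtain ⟨hpm, hpp, hpc⟩ := hTfact p hp
    show (normalizedFactors f).count p = _
    simp only [hnf, Multiset.count_add]
    rw [count_sig_eq ha.1 hac hpm hpc]
  have hcount_le : ∀ a ∈ S, ∀ p, (normalizedFactors a).count p ≤ e p := by
    intro a ha p
    obtain ⟨hac, ham, _, _⟩ := mem_S_facts hn hf ha.1 ha.2.1 ha.2.2
    have ha0 : a ≠ 0 := ha.1.ne_zero
    have hmir0 : a.mirror ≠ 0 := fun h => ha0 (mirror_eq_zero.mp h)
    have hnf : normalizedFactors f = Multiset.map sig (normalizedFactors a)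
        + normalizedFactors a := by
      rw [← ham, normalizedFactors_mul hmir0 ha0, nf_mirror ha.1 hac]
    show _ ≤ (normalizedFactors f).count p
    simp only [hnf, Multiset.count_add]; omega
  -- sig maps T into T
  have hsigT : ∀ p ∈ T, sig p ∈ T := by
    intro p hp
    have h1 := hrel a₀ ha₀ p hp
    have hpT := hTfact p hp
    have hsigsig : sig (sig p) = p := sig_sig hpT.1 hpT.2.2
    have hpmem : 0 < (normalizedFactors f).count p := by
      rw [hT, Multiset.mem_toFinset, ← Multiset.count_pos] at hp; exact hp
    -- count of sig p in nf f
    have ha0' : (a₀ : F[X]) ≠ 0 := ha₀.1.ne_zero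
    have hmir0 : (a₀ : F[X]).mirror ≠ 0 := fun h => ha0' (mirror_eq_zero.mp h)
    have hnf : normalizedFactors f = Multiset.map sig (normalizedFactors a₀)
        + normalizedFactors a₀ := by
      rw [← hm₀, normalizedFactors_mul hmir0 ha0', nf_mirror ha₀.1 hc₀]
    have hsigm : (sig p).Monic := sig_monic hpT.1 hpT.2.2
    have hsigc : (sig p).coeff 0 ≠ 0 := by
      rw [sig_coeff_zero hpT.1 hpT.2.2]; exact inv_ne_zero hpT.2.2
    have : (normalizedFactors f).count (sig p)
        = (normalizedFactors a₀).count p + (normalizedFactors a₀).count (sig p) := by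
      simp only [hnf, Multiset.count_add]
      rw [count_sig_eq ha₀.1 hc₀ hsigm hsigc, hsigsig]
    rw [hT, Multiset.mem_toFinset, ← Multiset.count_pos, this]
    have h1' : (normalizedFactors f).count p
        = (normalizedFactors a₀).count (sig p) + (normalizedFactors a₀).count p := h1
    omega
  -- now the injection
  have hfinS : Finite ↥S := by
    have : Function.Injective (fun (a : ↥S) => (fun i : Fin (n+1) => (a : F[X]).coeff i)) := by
      intro a b hab
      ext1
      apply Polynomial.ext
      intro k
      rcases le_or_gt k n with hk | hk
      · exact congrFun hab ⟨k, by omega⟩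
      · rw [coeff_eq_zero_of_natDegree_lt, coeff_eq_zero_of_natDegree_lt]
        · rw [b.2.2.1]; exact hk
        · rw [a.2.2.1]; exact hk
    exact Finite.of_injective _ this
  set idx : F[X] → ℕ := fun p => if h : p ∈ T then (T.equivFin ⟨p, h⟩ : ℕ) else 0 with hidx
  have hidxinj : ∀ p ∈ T, ∀ q ∈ T, idx p = idx q → p = q := by
    intro p hp q hq hpq
    rw [hidx] at hpq
    simp only [dif_pos hp, dif_pos hq] at hpq
    have := T.equivFin.injective (Fin.val_injective hpq)
    exact Subtype.ext_iff.1 this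
  -- recovery of a from counts on T
  have hrecover : ∀ a ∈ S, ∀ b ∈ S,
      (∀ p ∈ T, (normalizedFactors a).count p = (normalizedFactors b).count p) → a = b := by
    intro a ha b hb hab
    have : normalizedFactors a = normalizedFactors b := by
      ext p
      by_cases hp : p ∈ T
      · exact hab p hp
      · have h1 := hcount_le a ha p
        have h2 := hcount_le b hb p
        have : e p = 0 := by
          show (normalizedFactors f).count p = 0
          rw [Multiset.count_eq_zero]
          rw [hT, Multiset.mem_toFinset] at hp
          exact hp
        omega
    rw [← nf_prod_monic ha.1, ← nf_prod_monic hb.1, this]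
  -- define the injection
  set Ψ : ↥S × ↥S → (∀ p : ↥T, Fin (e p + 1)) := fun ab p =>
    ⟨if idx (p : F[X]) ≤ idx (sig (p : F[X])) then (normalizedFactors (ab.1 : F[X])).count (p : F[X])
      else (normalizedFactors (ab.2 : F[X])).count (p : F[X]), by
        rcases ab with ⟨a, b⟩
        rcases p with ⟨p, hp⟩
        dsimp only
        split
        · exact Nat.lt_succ_of_le (hcount_le a a.2 p)
        · exact Nat.lt_succ_of_le (hcount_le b b.2 p)⟩ with hΨ
  have hΨinj : Function.Injective Ψ := by
    rintro ⟨a, b⟩ ⟨a', b'⟩ hab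
    have hval : ∀ p : ↥T, (Ψ (a, b) p : ℕ) = (Ψ (a', b') p : ℕ) := by
      intro p; rw [hab]
    simp only [hΨ, Fin.mk.injEq] at hval
    have kk : ∀ p ∈ T, sig (sig p) = p := fun p hp => sig_sig (hTfact p hp).1 (hTfact p hp).2.2
    have ha : a = a' := by
      apply Subtype.ext
      apply hrecover a a.2 a' a'.2
      intro p hp
      by_cases hle : idx p ≤ idx (sig p)
      · have := hval ⟨p, hp⟩
        rwa [if_pos hle, if_pos hle] at this
      · have hsp : sig p ∈ T := hsigT p hp
        have hle2 : idx (sig p) ≤ idx (sig (sig p)) := by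
          rw [kk p hp]; omega
        have h3 := hval ⟨sig p, hsp⟩
        rw [if_pos hle2, if_pos hle2] at h3
        replace h3 : (normalizedFactors (a : F[X])).count (sig p)
            = (normalizedFactors (a' : F[X])).count (sig p) := h3
        have h1 := hrel a a.2 p hp
        have h2 := hrel a' a'.2 p hp
        omega
    have hb : b = b' := by
      apply Subtype.ext
      apply hrecover b b.2 b' b'.2
      intro p hp
      rcases lt_trichotomy (idx p) (idx (sig p)) with hlt | heq | hgt
      · -- use component at sig p, which is in else branch
        have hsp : sig p ∈ T := hsigT p hp
        have hle2 : ¬ idx (sig p) ≤ idx (sig (sig p)) := by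
          rw [kk p hp]; omega
        have h3 := hval ⟨sig p, hsp⟩
        rw [if_neg hle2, if_neg hle2] at h3
        replace h3 : (normalizedFactors (b : F[X])).count (sig p)
            = (normalizedFactors (b' : F[X])).count (sig p) := h3
        have h1 := hrel b b.2 p hp
        have h2 := hrel b' b'.2 p hp
        omega
      · -- p = sig p, count forced
        have hpef : sig p = p := hidxinj (sig p) (hsigT p hp) p hp heq.symm
        have h1 := hrel b b.2 p hp
        have h2 := hrel b' b'.2 p hp
        rw [hpef] at h1 h2
        have h4 := hval ⟨p, hp⟩
        omega
      · have h3 := hval ⟨p, hp⟩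
        replace h3 : (if idx p ≤ idx (sig p) then (normalizedFactors (a : F[X])).count p
              else (normalizedFactors (b : F[X])).count p)
            = (if idx p ≤ idx (sig p) then (normalizedFactors (a' : F[X])).count p
              else (normalizedFactors (b' : F[X])).count p) := h3
        rw [if_neg (by omega), if_neg (by omega)] at h3
        exact h3
    rw [ha, hb]
  -- conclude
  have hcard : S.ncard ^ 2 = Nat.card (↥S × ↥S) := by
    rw [Nat.card_prod, Nat.card_coe_set_eq]
    ring
  rw [hcard]
  refine le_trans (Nat.card_le_card_of_injective Ψ hΨinj) ?_
  rw [Nat.card_eq_fintype_card, Fintype.card_pi]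
  rw [← Finset.prod_attach T (fun p => e p + 1)]
  apply le_of_eq
  apply Finset.prod_congr rfl
  intro p _
  simp

open UniqueFactorizationMonoid in
lemma sum_deg {f : F[X]} (hf : f ≠ 0) :
    ∑ p ∈ (normalizedFactors f).toFinset,
      (normalizedFactors f).count p * p.natDegree = f.natDegree := by
  classical
  have h0 : (0 : F[X]) ∉ normalizedFactors f := zero_notMem_normalizedFactors f
  have hprod : ((normalizedFactors f).map natDegree).sum = f.natDegree := by
    rw [← natDegree_multiset_prod _ h0]
    obtain ⟨u, hu⟩ := UniqueFactorizationMonoid.prod_normalizedFactors hf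
    have hune : (u : F[X]) ≠ 0 := Units.ne_zero u
    have hprodne : (normalizedFactors f).prod ≠ 0 := by
      exact Multiset.prod_ne_zero h0
    conv_rhs => rw [← hu]
    rw [natDegree_mul hprodne hune, natDegree_eq_zero_of_isUnit u.isUnit, add_zero]
  rw [← hprod, Finset.sum_multiset_map_count]
  simp [smul_eq_mul]

lemma card_small [Fintype F] (T : Finset F[X]) (D : ℕ) (hdeg : ∀ p ∈ T, p.natDegree ≤ D) :
    T.card ≤ Fintype.card F ^ (D + 1) := by
  classical
  have : T.card ≤ (Finset.univ : Finset (Fin (D+1) → F)).card := by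
    apply Finset.card_le_card_of_injOn (fun p => fun i : Fin (D+1) => p.coeff i)
    · intro p _; exact Finset.mem_univ _
    · intro p hp q hq hpq
      apply Polynomial.ext
      intro k
      rcases le_or_gt k D with hk | hk
      · exact congrFun hpq ⟨k, by omega⟩
      · rw [coeff_eq_zero_of_natDegree_lt (lt_of_le_of_lt (hdeg p hp) hk),
          coeff_eq_zero_of_natDegree_lt (lt_of_le_of_lt (hdeg q hq) hk)]
  simpa [Fintype.card_fun] using this

lemma asy (c : ℝ) (hc : 0 < c) : ∃ M : ℝ, 0 ≤ M ∧ ∀ n : ℕ, 2 ≤ n →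
    Real.exp (2 * Real.sqrt (Real.log n)) * Real.sqrt n * Real.log (2 * n + 1)
      ≤ M + c * ((n : ℝ) / Real.log n) := by
  set K := 24 * Real.exp 8 with hK
  have hKpos : 0 < K := by positivity
  set c' := c / 8 with hc'
  have hc'pos : 0 < c' := by positivity
  refine ⟨K * (max 1 (K / c')) ^ 6, by positivity, ?_⟩
  intro n hn
  set x := (n : ℝ) with hx
  have hx2 : (2 : ℝ) ≤ x := by rw [hx]; exact_mod_cast hn
  have hxpos : 0 < x := by linarith
  set u := x ^ (8 : ℝ)⁻¹ with hu
  have hu1 : 1 < u := Real.one_lt_rpow_iff_of_pos hxpos |>.2 (Or.inl ⟨by linarith, by norm_num⟩)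
  have hupos : 0 < u := by linarith
  have hux : u ^ (8 : ℕ) = x := by
    rw [hu, ← Real.rpow_natCast (x ^ (8:ℝ)⁻¹) 8, ← Real.rpow_mul hxpos.le]
    norm_num
  have hlogx : Real.log x = 8 * Real.log u := by
    rw [← hux, Real.log_pow]; push_cast; ring
  have hlogu : 0 < Real.log u := Real.log_pos hu1
  have hlogule : Real.log u ≤ u := (Real.log_le_sub_one_of_pos hupos).trans (by linarith)
  -- sqrt x = u^4
  have hsqrtx : Real.sqrt x = u ^ (4 : ℕ) := by
    rw [show x = (u ^ (4:ℕ)) ^ 2 by rw [← pow_mul, ← hux]]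
    exact Real.sqrt_sq (by positivity)
  -- exp (2 sqrt (log x)) ≤ exp 8 * u
  have h1 : Real.exp (2 * Real.sqrt (Real.log x)) ≤ Real.exp 8 * u := by
    have hy : (0:ℝ) ≤ Real.log x := by rw [hlogx]; positivity
    have h2s : 2 * Real.sqrt (Real.log x) ≤ Real.log x / 8 + 8 := by
      nlinarith [sq_nonneg (Real.sqrt (Real.log x) - 8), Real.sq_sqrt hy,
        Real.sqrt_nonneg (Real.log x)]
    calc Real.exp (2 * Real.sqrt (Real.log x)) ≤ Real.exp (Real.log x / 8 + 8) :=
          Real.exp_le_exp.2 h2s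
      _ = Real.exp 8 * u := by
          rw [hlogx]
          rw [show (8:ℝ) * Real.log u / 8 + 8 = 8 + Real.log u by ring]
          rw [Real.exp_add, Real.exp_log hupos]
  -- log (2x+1) ≤ 24 * u
  have h2 : Real.log (2 * x + 1) ≤ 24 * Real.log u := by
    have hle : 2 * x + 1 ≤ x ^ (3:ℕ) := by
      have hsq : 2 * x ≤ x * x := by nlinarith
      have hcub : 2 * (x * x) ≤ x * (x * x) := by nlinarith
      calc 2 * x + 1 ≤ 2 * x + 2 * x := by linarith
        _ = 2 * (2 * x) := by ring
        _ ≤ 2 * (x * x) := by linarith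
        _ ≤ x * (x * x) := hcub
        _ = x ^ (3:ℕ) := by ring
    calc Real.log (2 * x + 1) ≤ Real.log (x ^ (3:ℕ)) :=
          Real.log_le_log (by linarith) hle
      _ = 3 * Real.log x := by rw [Real.log_pow]; push_cast; ring
      _ = 24 * Real.log u := by rw [hlogx]; ring
  have h2' : Real.log (2 * x + 1) ≤ 24 * u := h2.trans (by linarith)
  have hlhs : Real.exp (2 * Real.sqrt (Real.log x)) * Real.sqrt x * Real.log (2 * x + 1)
      ≤ K * u ^ (6 : ℕ) := by
    have hlog_nonneg : 0 ≤ Real.log (2 * x + 1) := Real.log_nonneg (by linarith)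
    calc Real.exp (2 * Real.sqrt (Real.log x)) * Real.sqrt x * Real.log (2 * x + 1)
        ≤ (Real.exp 8 * u) * (u ^ (4:ℕ)) * (24 * u) := by
          apply mul_le_mul
          · apply mul_le_mul h1 (le_of_eq hsqrtx) (Real.sqrt_nonneg x) (by positivity)
          · exact h2'
          · exact hlog_nonneg
          · positivity
      _ = K * u ^ (6 : ℕ) := by rw [hK]; ring
  -- rhs ≥ c' * u^7
  have hrhs : c' * u ^ (7 : ℕ) ≤ c * (x / Real.log x) := by
    have hlx : 0 < Real.log x := by rw [hlogx]; positivity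
    rw [mul_div_assoc'] at *
    rw [le_div_iff₀ hlx]
    have hint : u ^ (7:ℕ) * Real.log u ≤ u ^ (8:ℕ) := by
      calc u ^ (7:ℕ) * Real.log u ≤ u ^ (7:ℕ) * u :=
            mul_le_mul_of_nonneg_left hlogule (by positivity)
        _ = u ^ (8:ℕ) := by ring
    calc c' * u ^ (7:ℕ) * Real.log x = c * (u ^ (7:ℕ) * Real.log u) := by
          rw [hlogx, hc']; ring
      _ ≤ c * u ^ (8:ℕ) := by nlinarith
      _ = c * x := by rw [hux]
  -- combine
  have hcase : K * u ^ (6:ℕ) ≤ K * (max 1 (K / c')) ^ 6 + c' * u ^ (7:ℕ) := by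
    rcases le_or_gt u (max 1 (K / c')) with h | h
    · have : u ^ (6:ℕ) ≤ (max 1 (K/c')) ^ 6 := by
        apply pow_le_pow_left₀ hupos.le h
      nlinarith [pow_nonneg hupos.le 7]
    · have hKc : K / c' < u := lt_of_le_of_lt (le_max_right _ _) h
      have hK' : K < c' * u := by
        rw [div_lt_iff₀ hc'pos] at hKc; linarith [hKc]
      have h6 : K * u ^ (6:ℕ) < (c' * u) * u ^ (6:ℕ) :=
        mul_lt_mul_of_pos_right hK' (pow_pos hupos 6)
      have h7 : (c' * u) * u ^ (6:ℕ) = c' * u ^ (7:ℕ) := by ring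
      have hmax : 0 ≤ K * (max 1 (K / c')) ^ 6 := by positivity
      linarith
  have : x / Real.log x = (n:ℝ) / Real.log n := rfl
  calc Real.exp (2 * Real.sqrt (Real.log x)) * Real.sqrt x * Real.log (2 * x + 1)
      ≤ K * u ^ (6:ℕ) := hlhs
    _ ≤ K * (max 1 (K / c')) ^ 6 + c' * u ^ (7:ℕ) := hcase
    _ ≤ K * (max 1 (K / c')) ^ 6 + c * (x / Real.log x) := by linarith [hrhs]

set_option maxHeartbeats 1000000 in
open UniqueFactorizationMonoid in
/-- For every `ε > 0` there is a constant `C(ε)` such that the following holds. Let `n ≥ 2`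
and `f ∈ F_q[t]` of degree `2n`, and let `N(f)` be the number of monic polynomials `a` of
degree `n` with `a*·a = f` (where `a*` is the reversed polynomial of `a`). Then
`N(f) ≤ C(ε) · min { 2ⁿ, q^{(2+ε) n / log_q n} }`. -/
theorem statement6 (ε : ℝ) (hε : 0 < ε) :
    ∃ C : ℝ, 0 < C ∧
      ∀ (F : Type) [Field F] [Fintype F] (n : ℕ), 2 ≤ n →
        ∀ f : F[X], f.natDegree = 2 * n →
          ({a : F[X] | a.Monic ∧ a.natDegree = n ∧ a.reverse * a = f}.ncard : ℝ)
            ≤ C * min ((2 : ℝ) ^ n)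
                ((Fintype.card F : ℝ) ^
                  ((2 + ε) * (n : ℝ) / (Real.log (n : ℝ) / Real.log (Fintype.card F : ℝ)))) := by
  classical
  set c : ℝ := 2 * ε * (Real.log 2) ^ 2 with hc
  have hcpos : 0 < c := by
    have := Real.log_pos (by norm_num : (1:ℝ) < 2)
    positivity
  obtain ⟨M, hM0, hMle⟩ := asy c hcpos
  refine ⟨max 1 (Real.exp (M / 2)), lt_of_lt_of_le one_pos (le_max_left _ _), ?_⟩
  set C := max 1 (Real.exp (M / 2)) with hC
  have hC1 : 1 ≤ C := le_max_left _ _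
  have hCM : Real.exp M ≤ C ^ 2 := by
    have : Real.exp M = (Real.exp (M / 2)) ^ 2 := by
      rw [← Real.exp_nat_mul]; congr 1; push_cast; ring
    rw [this]
    exact pow_le_pow_left₀ (Real.exp_pos _).le (le_max_right _ _) 2
  intro F _ _ n hn f hf
  letI : DecidableEq F := Classical.decEq F
  set S := {a : F[X] | a.Monic ∧ a.natDegree = n ∧ a.reverse * a = f} with hS
  set N := S.ncard with hN
  set T := (normalizedFactors f).toFinset with hT
  set e : F[X] → ℕ := fun p => (normalizedFactors f).count p with he
  have hn1 : 1 ≤ n := by omega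
  have hf0 : f ≠ 0 := by
    intro h; rw [h, natDegree_zero] at hf; omega
  have hNP : N ^ 2 ≤ ∏ p ∈ T, (e p + 1) := ncard_sq_le hn1 hf
  have hTdeg : ∀ p ∈ T, 1 ≤ p.natDegree := by
    intro p hp
    rw [hT, Multiset.mem_toFinset] at hp
    exact (irreducible_of_normalized_factor p hp).natDegree_pos
  have hsum : ∑ p ∈ T, e p * p.natDegree = 2 * n := by
    rw [← hf]; exact sum_deg hf0
  have hterm : ∀ p ∈ T, e p * p.natDegree ≤ 2 * n := by
    intro p hp
    rw [← hsum]
    exact Finset.single_le_sum (f := fun p => e p * p.natDegree) (fun q _ => Nat.zero_le _) hp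
  -- (1) N ≤ 2^n
  have hP2 : ∏ p ∈ T, (e p + 1) ≤ 2 ^ (2 * n) := by
    calc ∏ p ∈ T, (e p + 1) ≤ ∏ p ∈ T, 2 ^ (e p * p.natDegree) := by
          apply Finset.prod_le_prod'
          intro p hp
          calc e p + 1 ≤ 2 ^ (e p) := Nat.succ_le_of_lt (Nat.lt_two_pow_self)
            _ ≤ 2 ^ (e p * p.natDegree) :=
                Nat.pow_le_pow_right (by norm_num) (Nat.le_mul_of_pos_right _ (hTdeg p hp))
      _ = 2 ^ (∑ p ∈ T, e p * p.natDegree) := by rw [Finset.prod_pow_eq_pow_sum]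
      _ = 2 ^ (2 * n) := by rw [hsum]
  have hN2n : N ≤ 2 ^ n := by
    by_contra hcon
    push_neg at hcon
    have h1 : (2 ^ n) ^ 2 < N ^ 2 := Nat.pow_lt_pow_left hcon (by norm_num)
    have h2 : (2 ^ n) ^ 2 = 2 ^ (2 * n) := by rw [← pow_mul, mul_comm]
    omega
  -- setup for real estimates
  set q := Fintype.card F with hq
  have hq2 : 2 ≤ q := Fintype.one_lt_card
  have hA1 : (1 : ℝ) < (q : ℝ) := by exact_mod_cast hq2
  have hA0 : (0 : ℝ) < (q : ℝ) := by linarith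
  have hlq : 0 < Real.log q := Real.log_pos hA1
  have hln : 0 < Real.log n := Real.log_pos (by exact_mod_cast hn)
  have hlq2 : Real.log 2 ≤ Real.log q := Real.log_le_log (by norm_num) (by exact_mod_cast hq2)
  have hl2 : 0 < Real.log 2 := Real.log_pos (by norm_num)
  set E := (2 + ε) * (n : ℝ) / (Real.log n / Real.log q) with hE
  have hqE : (q : ℝ) ^ E = Real.exp ((2 + ε) * n * (Real.log q * Real.log q) / Real.log n) := by
    rw [Real.rpow_def_of_pos hA0]
    congr 1
    rw [hE]
    field_simp
  have hqEpos : 0 < (q:ℝ) ^ E := Real.rpow_pos_of_pos hA0 E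
  -- N ≤ C * q^E
  have hmain2 : (N : ℝ) ≤ C * (q : ℝ) ^ E := by
    rcases le_or_gt (Real.log 2 * Real.log n) (Real.log q * Real.log q) with hcase | hcase
    · -- case A : 2^n ≤ q^E
      have h2n : (2:ℝ) ^ n ≤ (q:ℝ) ^ E := by
        rw [hqE, show (2:ℝ) ^ n = Real.exp (n * Real.log 2) by
          rw [← Real.exp_log (by positivity : (0:ℝ) < (2:ℝ)^n), Real.log_pow]]
        apply Real.exp_le_exp.2
        rw [le_div_iff₀ hln]
        have t1 : (n:ℝ) * Real.log 2 * Real.log n ≤ (n:ℝ) * (Real.log q * Real.log q) := by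
          have := mul_le_mul_of_nonneg_left hcase (Nat.cast_nonneg (α := ℝ) n)
          nlinarith [this]
        have t2 : (n:ℝ) * (Real.log q * Real.log q)
            ≤ (2 + ε) * ((n:ℝ) * (Real.log q * Real.log q)) := by
          apply le_mul_of_one_le_left
          · positivity
          · linarith
        nlinarith [t1, t2]
      have : (N : ℝ) ≤ (2:ℝ) ^ n := by
        calc (N : ℝ) ≤ ((2 ^ n : ℕ) : ℝ) := by exact_mod_cast hN2n
          _ = (2:ℝ) ^ n := by push_cast; ring
      calc (N:ℝ) ≤ (2:ℝ)^n := this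
        _ ≤ (q:ℝ) ^ E := h2n
        _ ≤ C * (q:ℝ) ^ E := le_mul_of_one_le_left hqEpos.le hC1
    · -- case B
      set lq := Real.log q with hlq'
      set ln := Real.log n with hln'
      set L := ln / lq with hL
      have hLpos : 0 < L := div_pos hln hlq
      set D := Nat.ceil (L / 2) with hD
      have hDL : L / 2 ≤ (D : ℝ) := Nat.le_ceil _
      have hDL2 : (D : ℝ) ≤ L / 2 + 1 := (Nat.ceil_lt_add_one (by positivity)).le
      set Tb := T.filter (fun p => D < p.natDegree) with hTb
      set Ts := T.filter (fun p => ¬ D < p.natDegree) with hTs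
      have hsplit : ∏ p ∈ T, (e p + 1)
          = (∏ p ∈ Tb, (e p + 1)) * ∏ p ∈ Ts, (e p + 1) :=
        (Finset.prod_filter_mul_prod_filter_not T _ _).symm
      set Sb := ∑ p ∈ Tb, e p with hSb'
      have hSb : (D + 1) * Sb ≤ 2 * n := by
        calc (D + 1) * Sb = ∑ p ∈ Tb, (D + 1) * e p := Finset.mul_sum _ _ _
          _ ≤ ∑ p ∈ Tb, e p * p.natDegree := by
              apply Finset.sum_le_sum
              intro p hp
              have hdp : D + 1 ≤ p.natDegree := (Finset.mem_filter.1 hp).2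
              calc (D + 1) * e p = e p * (D + 1) := by ring
                _ ≤ e p * p.natDegree := Nat.mul_le_mul_left _ hdp
          _ ≤ ∑ p ∈ T, e p * p.natDegree :=
              Finset.sum_le_sum_of_subset (Finset.filter_subset _ _)
          _ = 2 * n := hsum
      have hbig : (∏ p ∈ Tb, (e p + 1)) ≤ 2 ^ Sb := by
        calc ∏ p ∈ Tb, (e p + 1) ≤ ∏ p ∈ Tb, 2 ^ (e p) := by
              apply Finset.prod_le_prod'
              intro p _
              exact Nat.succ_le_of_lt (Nat.lt_two_pow_self)
          _ = 2 ^ Sb := by rw [Finset.prod_pow_eq_pow_sum]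
      have hsmall : (∏ p ∈ Ts, (e p + 1)) ≤ (2 * n + 1) ^ (q ^ (D + 1)) := by
        calc ∏ p ∈ Ts, (e p + 1) ≤ ∏ p ∈ Ts, (2 * n + 1) := by
              apply Finset.prod_le_prod'
              intro p hp
              have hpT : p ∈ T := Finset.filter_subset _ _ hp
              have h1 := hterm p hpT
              have h2 := hTdeg p hpT
              have : e p ≤ e p * p.natDegree := Nat.le_mul_of_pos_right _ h2
              omega
          _ = (2 * n + 1) ^ Ts.card := Finset.prod_const _
          _ ≤ (2 * n + 1) ^ (q ^ (D + 1)) := by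
              apply Nat.pow_le_pow_right (by omega)
              exact card_small Ts D (fun p hp => by
                have := (Finset.mem_filter.1 hp).2; omega)
      -- move to reals
      set R := (n : ℝ) * lq * lq / ln with hR
      have hRpos : 0 < R := by positivity
      have hbigR : ((∏ p ∈ Tb, (e p + 1) : ℕ) : ℝ) ≤ Real.exp (4 * R) := by
        have h1 : ((∏ p ∈ Tb, (e p + 1) : ℕ) : ℝ) ≤ (2:ℝ) ^ Sb := by
          exact_mod_cast hbig
        have h2 : (2:ℝ) ^ Sb ≤ Real.exp (Sb * lq) := by
          rw [show (Sb:ℝ) * lq = Real.log ((q:ℝ) ^ Sb) by rw [Real.log_pow]]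
          rw [Real.exp_log (by positivity)]
          exact pow_le_pow_left₀ (by norm_num) (by exact_mod_cast hq2) Sb
        have h3 : (Sb : ℝ) * lq ≤ 4 * R := by
          have hcast : ((D:ℝ) + 1) * Sb ≤ 2 * n := by exact_mod_cast hSb
          have hD2 : L / 2 ≤ (D:ℝ) + 1 := by linarith
          have hSb2 : (Sb : ℝ) ≤ 2 * n / (L / 2) := by
            rw [le_div_iff₀ (by positivity)]
            calc (Sb:ℝ) * (L/2) ≤ (Sb:ℝ) * ((D:ℝ)+1) :=
                  mul_le_mul_of_nonneg_left hD2 (Nat.cast_nonneg _)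
              _ = ((D:ℝ)+1) * Sb := by ring
              _ ≤ 2 * n := hcast
          have h4L : 2 * (n:ℝ) / (L / 2) = 4 * n / L := by
            field_simp
            ring
          have hfin : (Sb : ℝ) ≤ 4 * n / L := by rw [← h4L]; exact hSb2
          calc (Sb:ℝ) * lq ≤ (4 * n / L) * lq :=
                mul_le_mul_of_nonneg_right hfin hlq.le
            _ = 4 * R := by rw [hR, hL]; field_simp
        calc ((∏ p ∈ Tb, (e p + 1) : ℕ) : ℝ) ≤ (2:ℝ) ^ Sb := h1
          _ ≤ Real.exp (Sb * lq) := h2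
          _ ≤ Real.exp (4 * R) := Real.exp_le_exp.2 h3
      have hsmallR : ((∏ p ∈ Ts, (e p + 1) : ℕ) : ℝ) ≤ Real.exp (M + 2 * ε * R) := by
        have h1 : ((∏ p ∈ Ts, (e p + 1) : ℕ) : ℝ)
            ≤ ((2 * n + 1 : ℕ) : ℝ) ^ (q ^ (D + 1) : ℕ) := by exact_mod_cast hsmall
        have hbase : (1:ℝ) ≤ ((2 * n + 1 : ℕ) : ℝ) := by
          have : (1:ℕ) ≤ 2*n+1 := by omega
          exact_mod_cast this
        have hlogb : 0 ≤ Real.log ((2 * n + 1 : ℕ) : ℝ) := Real.log_nonneg hbase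
        have h2 : ((2 * n + 1 : ℕ) : ℝ) ^ (q ^ (D + 1) : ℕ)
            = Real.exp ((q ^ (D + 1) : ℕ) * Real.log ((2 * n + 1 : ℕ) : ℝ)) := by
          rw [← Real.log_pow, Real.exp_log (by positivity)]
        have hqD : ((q ^ (D + 1) : ℕ) : ℝ) ≤ Real.exp (2 * Real.sqrt ln) * Real.sqrt n := by
          have e1 : ((q ^ (D + 1) : ℕ) : ℝ) = Real.exp (((D:ℝ) + 1) * lq) := by
            push_cast
            rw [show ((D:ℝ)+1) * lq = Real.log ((q:ℝ) ^ (D+1)) by rw [Real.log_pow]; push_cast; ring]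
            rw [Real.exp_log (by positivity)]
          have e2 : ((D:ℝ) + 1) * lq ≤ ln / 2 + 2 * Real.sqrt ln := by
            have hlqs : lq ≤ Real.sqrt ln := by
              have h3 : lq ≤ Real.sqrt (Real.log 2 * ln) := by
                rw [show lq = Real.sqrt (lq ^ 2) from (Real.sqrt_sq hlq.le).symm]
                apply Real.sqrt_le_sqrt
                nlinarith [hcase]
              have h4 : Real.sqrt (Real.log 2 * ln) ≤ Real.sqrt ln := by
                apply Real.sqrt_le_sqrt
                have hl21 : Real.log 2 ≤ 1 := by
                  calc Real.log 2 ≤ 2 - 1 := Real.log_le_sub_one_of_pos (by norm_num)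
                    _ = 1 := by norm_num
                nlinarith [hln]
              linarith
            have : ((D:ℝ) + 1) * lq ≤ (L / 2 + 2) * lq := by
              apply mul_le_mul_of_nonneg_right _ hlq.le
              linarith
            calc ((D:ℝ) + 1) * lq ≤ (L / 2 + 2) * lq := this
              _ = ln / 2 + 2 * lq := by rw [hL]; field_simp
              _ ≤ ln / 2 + 2 * Real.sqrt ln := by linarith
          have e3 : Real.exp (ln / 2 + 2 * Real.sqrt ln)
              = Real.exp (2 * Real.sqrt ln) * Real.sqrt n := by
            rw [Real.exp_add]
            have : Real.exp (ln / 2) = Real.sqrt n := by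
              rw [Real.sqrt_eq_rpow, Real.rpow_def_of_pos (by positivity : (0:ℝ) < (n:ℝ))]
              congr 1
              rw [hln']; ring
            rw [this, mul_comm]
          rw [e1, ← e3]
          exact Real.exp_le_exp.2 e2
        have h3 : ((q ^ (D + 1) : ℕ) : ℝ) * Real.log ((2 * n + 1 : ℕ) : ℝ)
            ≤ M + c * ((n:ℝ) / ln) := by
          have step : ((q ^ (D + 1) : ℕ) : ℝ) * Real.log ((2 * n + 1 : ℕ) : ℝ)
              ≤ Real.exp (2 * Real.sqrt ln) * Real.sqrt n * Real.log ((2 * n + 1 : ℕ) : ℝ) :=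
            mul_le_mul_of_nonneg_right hqD hlogb
          have hM := hMle n hn
          have hcast2 : Real.log ((2 * n + 1 : ℕ) : ℝ) = Real.log (2 * (n:ℝ) + 1) := by
            push_cast; ring_nf
          rw [hcast2] at step
          calc ((q ^ (D + 1) : ℕ) : ℝ) * Real.log ((2 * n + 1 : ℕ) : ℝ)
              = ((q ^ (D + 1) : ℕ) : ℝ) * Real.log (2 * (n:ℝ) + 1) := by rw [hcast2]
            _ ≤ Real.exp (2 * Real.sqrt ln) * Real.sqrt n * Real.log (2 * (n:ℝ) + 1) := step
            _ ≤ M + c * ((n:ℝ) / ln) := hM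
        have h4 : c * ((n:ℝ) / ln) ≤ 2 * ε * R := by
          rw [hc, hR]
          have hsq : Real.log 2 ^ 2 ≤ lq * lq := by nlinarith [hl2, hlq2]
          have : (n:ℝ) / ln * Real.log 2 ^ 2 ≤ (n:ℝ) * lq * lq / ln := by
            rw [div_mul_eq_mul_div, div_le_div_iff₀ hln hln]
            have : (n:ℝ) * Real.log 2 ^ 2 ≤ (n:ℝ) * (lq * lq) :=
              mul_le_mul_of_nonneg_left hsq (Nat.cast_nonneg _)
            nlinarith [this, hln]
          nlinarith [this, hε]
        calc ((∏ p ∈ Ts, (e p + 1) : ℕ) : ℝ)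
            ≤ ((2 * n + 1 : ℕ) : ℝ) ^ (q ^ (D + 1) : ℕ) := h1
          _ = Real.exp ((q ^ (D + 1) : ℕ) * Real.log ((2 * n + 1 : ℕ) : ℝ)) := h2
          _ ≤ Real.exp (M + c * ((n:ℝ) / ln)) := Real.exp_le_exp.2 h3
          _ ≤ Real.exp (M + 2 * ε * R) := Real.exp_le_exp.2 (by linarith)
      -- combine
      have hNsq : ((N:ℝ)) ^ 2 ≤ Real.exp (4 * R) * Real.exp (M + 2 * ε * R) := by
        have h0 : ((N : ℕ):ℝ) ^ 2 ≤ ((∏ p ∈ T, (e p + 1) : ℕ) : ℝ) := by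
          exact_mod_cast hNP
        have hprodsplit : ((∏ p ∈ T, (e p + 1) : ℕ) : ℝ)
            = ((∏ p ∈ Tb, (e p + 1) : ℕ) : ℝ) * ((∏ p ∈ Ts, (e p + 1) : ℕ) : ℝ) := by
          rw [← Nat.cast_mul, hsplit]
        rw [hprodsplit] at h0
        calc ((N:ℝ)) ^ 2 ≤ ((∏ p ∈ Tb, (e p + 1) : ℕ) : ℝ) * ((∏ p ∈ Ts, (e p + 1) : ℕ) : ℝ) := h0
          _ ≤ Real.exp (4 * R) * Real.exp (M + 2 * ε * R) := by
              apply mul_le_mul hbigR hsmallR (Nat.cast_nonneg _) (Real.exp_pos _).le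
      have hsqbound : Real.exp (4 * R) * Real.exp (M + 2 * ε * R) ≤ (C * (q:ℝ) ^ E) ^ 2 := by
        have hqE2 : ((q:ℝ) ^ E) ^ 2 = Real.exp ((4 + 2 * ε) * R) := by
          rw [hqE, ← Real.exp_nat_mul]
          congr 1
          rw [hR]
          push_cast
          ring
        rw [mul_pow, hqE2, ← Real.exp_add]
        calc Real.exp (4 * R + (M + 2 * ε * R)) = Real.exp M * Real.exp ((4 + 2*ε) * R) := by
              rw [← Real.exp_add]; congr 1; ring
          _ ≤ C ^ 2 * Real.exp ((4 + 2*ε) * R) :=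
              mul_le_mul_of_nonneg_right hCM (Real.exp_pos _).le
      have hfinal : ((N:ℝ)) ^ 2 ≤ (C * (q:ℝ) ^ E) ^ 2 := le_trans hNsq hsqbound
      have hCq : 0 ≤ C * (q:ℝ) ^ E := by positivity
      exact (pow_le_pow_iff_left₀ (Nat.cast_nonneg _) hCq (by norm_num)).1 hfinal
  -- combine with min
  rcases le_total ((2:ℝ) ^ n) ((q:ℝ) ^ E) with hm | hm
  · rw [min_eq_left hm]
    calc (N : ℝ) ≤ (2:ℝ) ^ n := by
          calc (N : ℝ) ≤ ((2 ^ n : ℕ) : ℝ) := by exact_mod_cast hN2n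
            _ = (2:ℝ) ^ n := by push_cast; ring
      _ ≤ C * (2:ℝ)^n := le_mul_of_one_le_left (by positivity) hC1
  · rw [min_eq_right hm]
    exact hmain2
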